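/- Let G be a connected graph with maximum degree Δ(G) ≥ 2. Then b_R(G) ≤ 2·ad(G) + Δ(G) − 3, where ad(G) = 2|E(G)|/|V(G)| is the average degree. -/

import Mathlib

/-- A Roman dominating function on `G`: labels in `{0,1,2}` and every vertex
labeled `0` has a neighbor labeled `2`. -/
def IsRDF {V : Type*} (G : SimpleGraph V) (f : V → ℕ) : Prop :=
  (∀ v, f v ≤ 2) ∧ ∀ v, f v = 0 → ∃ u, G.Adj v u ∧ f u = 2

/-- The Roman domination number of `G`. -/
noncomputable def romanDom {V : Type*} [Fintype V] (G : SimpleGraph V) : ℕ :=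
  sInf {w | ∃ f, IsRDF G f ∧ ∑ v, f v = w}

/-- The Roman domination number of the vertex-deleted graph `G - v`. -/
noncomputable def romanDomDel {V : Type*} [Fintype V] [DecidableEq V]
    (G : SimpleGraph V) (v : V) : ℕ :=
  romanDom (G.induce {w | w ≠ v})

/-- The Roman bondage number of `G`. -/
noncomputable def romanBondage {V : Type*} [Fintype V] [DecidableEq V]
    (G : SimpleGraph V) : ℕ :=
  sInf {k | ∃ B : Finset (Sym2 V), ↑B ⊆ G.edgeSet ∧ B.card = k ∧
    romanDom (G.deleteEdges ↑B) ≠ romanDom G}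

lemma romanDom_exists {V : Type*} [Fintype V] (G : SimpleGraph V) :
    ∃ f, IsRDF G f ∧ ∑ v, f v = romanDom G :=
  Nat.sInf_mem (s := {w | ∃ f, IsRDF G f ∧ ∑ v, f v = w})
    ⟨_, (fun _ => 1), ⟨fun _ => one_le_two, fun _ h => absurd h one_ne_zero⟩, rfl⟩

lemma romanDom_le {V : Type*} [Fintype V] (G : SimpleGraph V) {f : V → ℕ} (hf : IsRDF G f) :
    romanDom G ≤ ∑ v, f v :=
  Nat.sInf_le ⟨f, hf, rfl⟩

open Finset in
lemma path_bondage {V : Type*} [Fintype V] [DecidableEq V] (G : SimpleGraph V)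
    [DecidableRel G.Adj] {u v w : V} (h1 : G.Adj u v) (h2 : G.Adj v w) (huw : u ≠ w) :
    romanBondage G + 3 ≤ G.degree u + G.degree v + G.degree w := by
  classical
  have huv : u ≠ v := h1.ne
  have hvw : v ≠ w := h2.ne
  set B : Finset (Sym2 V) :=
    G.edgeFinset.filter (fun e => (u ∈ e ∨ v ∈ e ∨ w ∈ e) ∧ e ≠ s(v, w)) with hB
  have hBsub : ↑B ⊆ G.edgeSet := by
    intro e he
    simp only [B, coe_filter, Set.mem_setOf_eq, SimpleGraph.mem_edgeFinset] at he
    exact he.1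
  -- card bound
  have hcard : B.card + 3 ≤ G.degree u + G.degree v + G.degree w := by
    have hvwB : s(v, w) ∉ B := by simp [hB]
    have hsub : B ∪ {s(v, w)} ⊆
        G.incidenceFinset u ∪ (G.incidenceFinset v ∪ G.incidenceFinset w) := by
      intro e he
      rcases mem_union.1 he with he | he
      · simp only [hB, mem_filter, SimpleGraph.mem_edgeFinset] at he
        obtain ⟨hmem, hor, -⟩ := he
        simp only [mem_union, SimpleGraph.mem_incidenceFinset, SimpleGraph.incidenceSet]
        rcases hor with h | h | h
        · exact Or.inl ⟨hmem, h⟩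
        · exact Or.inr (Or.inl ⟨hmem, h⟩)
        · exact Or.inr (Or.inr ⟨hmem, h⟩)
      · simp only [mem_singleton] at he
        subst he
        exact mem_union_right _ (mem_union_left _ (by
          simp [SimpleGraph.mem_incidenceFinset, SimpleGraph.mk'_mem_incidenceSet_left_iff, h2]))
    have h1mem : s(u, v) ∈ G.incidenceFinset u ∩ (G.incidenceFinset v ∪ G.incidenceFinset w) := by
      simp [SimpleGraph.mem_incidenceFinset, SimpleGraph.mk'_mem_incidenceSet_left_iff,
        SimpleGraph.mk'_mem_incidenceSet_right_iff, h1]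
    have h2mem : s(v, w) ∈ G.incidenceFinset v ∩ G.incidenceFinset w := by
      simp [SimpleGraph.mem_incidenceFinset, SimpleGraph.mk'_mem_incidenceSet_left_iff,
        SimpleGraph.mk'_mem_incidenceSet_right_iff, h2]
    have e1 : (G.incidenceFinset v ∪ G.incidenceFinset w).card + 1 ≤
        G.degree v + G.degree w := by
      have := card_union_add_card_inter (G.incidenceFinset v) (G.incidenceFinset w)
      have h1' : 1 ≤ (G.incidenceFinset v ∩ G.incidenceFinset w).card :=
        card_pos.2 ⟨_, h2mem⟩
      rw [G.card_incidenceFinset_eq_degree, G.card_incidenceFinset_eq_degree] at this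
      omega
    have e2 : (G.incidenceFinset u ∪ (G.incidenceFinset v ∪ G.incidenceFinset w)).card + 1 ≤
        G.degree u + (G.incidenceFinset v ∪ G.incidenceFinset w).card := by
      have := card_union_add_card_inter (G.incidenceFinset u)
        (G.incidenceFinset v ∪ G.incidenceFinset w)
      have h1' : 1 ≤ (G.incidenceFinset u ∩
          (G.incidenceFinset v ∪ G.incidenceFinset w)).card := card_pos.2 ⟨_, h1mem⟩
      rw [G.card_incidenceFinset_eq_degree] at this
      omega
    have e3 : (B ∪ {s(v, w)}).card = B.card + 1 := by
      rw [union_comm]; exact card_insert_of_notMem hvwB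
    have := card_le_card hsub
    omega
  -- structure of the deleted graph
  set H := G.deleteEdges ↑B with hH
  have hmemB : ∀ x y : V, G.Adj x y → (x = u ∨ x = v ∨ x = w) → s(x, y) ≠ s(v, w) →
      s(x, y) ∈ B := by
    intro x y hxy hor hne
    simp only [hB, mem_filter, SimpleGraph.mem_edgeFinset, SimpleGraph.mem_edgeSet]
    refine ⟨hxy, ?_, hne⟩
    rcases hor with rfl | rfl | rfl
    · exact Or.inl (Sym2.mem_mk_left _ _)
    · exact Or.inr (Or.inl (Sym2.mem_mk_left _ _))
    · exact Or.inr (Or.inr (Sym2.mem_mk_left _ _))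
  have hu_iso : ∀ y, ¬ H.Adj u y := by
    intro y hy
    rw [hH, SimpleGraph.deleteEdges_adj] at hy
    refine hy.2 ?_
    refine hmemB u y hy.1 (Or.inl rfl) ?_
    intro hEq
    rcases Sym2.eq_iff.1 hEq with ⟨rfl, rfl⟩ | ⟨rfl, rfl⟩
    · exact huv rfl
    · exact huw rfl
  have hv_only : ∀ y, H.Adj v y → y = w := by
    intro y hy
    rw [hH, SimpleGraph.deleteEdges_adj] at hy
    by_contra hyw
    refine hy.2 (hmemB v y hy.1 (Or.inr (Or.inl rfl)) ?_)
    intro hEq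
    rcases Sym2.eq_iff.1 hEq with ⟨-, rfl⟩ | ⟨rfl, rfl⟩
    · exact hyw rfl
    · exact hvw rfl
  have hw_only : ∀ y, H.Adj w y → y = v := by
    intro y hy
    rw [hH, SimpleGraph.deleteEdges_adj] at hy
    by_contra hyv
    refine hy.2 (hmemB w y hy.1 (Or.inr (Or.inr rfl)) ?_)
    intro hEq
    rcases Sym2.eq_iff.1 hEq with ⟨rfl, rfl⟩ | ⟨-, rfl⟩
    · exact hvw rfl
    · exact hyv rfl
  obtain ⟨f, hf, hfsum⟩ := romanDom_exists H
  have hfu : 1 ≤ f u := by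
    rcases Nat.eq_zero_or_pos (f u) with h0 | h
    · obtain ⟨y, hy, -⟩ := hf.2 u h0
      exact absurd hy (hu_iso y)
    · exact h
  have hfvw : 2 ≤ f v + f w := by
    rcases Nat.eq_zero_or_pos (f v) with h0 | hv1
    · obtain ⟨y, hy, hy2⟩ := hf.2 v h0
      rw [hv_only y hy] at hy2
      omega
    rcases Nat.eq_zero_or_pos (f w) with h0 | hw1
    · obtain ⟨y, hy, hy2⟩ := hf.2 w h0
      rw [hw_only y hy] at hy2
      omega
    omega
  set g : V → ℕ := fun x => if x = u then 0 else if x = v then 2 else if x = w then 0 else f x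
    with hg
  have hgv : g v = 2 := by simp [hg, huv.symm]
  have hgRDF : IsRDF G g := by
    constructor
    · intro x
      simp only [hg]
      split_ifs
      · omega
      · omega
      · omega
      · exact hf.1 x
    · intro x hx
      simp only [hg] at hx
      split_ifs at hx with hxu hxv hxw
      · exact ⟨v, hxu ▸ h1, hgv⟩
      · exact ⟨v, hxw ▸ h2.symm, hgv⟩
      · obtain ⟨y, hy, hfy⟩ := hf.2 x hx
        have hyu : y ≠ u := fun h => hu_iso x (h ▸ hy).symm
        have hyv : y ≠ v := fun h => hxw (hv_only x (h ▸ hy).symm)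
        have hyw : y ≠ w := fun h => hxv (hw_only x (h ▸ hy).symm)
        refine ⟨y, ?_, ?_⟩
        · exact (SimpleGraph.deleteEdges_le _ (hH ▸ hy) : G.Adj x y)
        · simp [hg, hyu, hyv, hyw, hfy]
  -- sums
  have hsplit : ∀ h : V → ℕ, ∑ x, h x = h u + h v + h w + ∑ x ∈ univ \ {u, v, w}, h x := by
    intro h
    have hsubset : ({u, v, w} : Finset V) ⊆ univ := subset_univ _
    rw [← sum_sdiff hsubset]
    have : ∑ x ∈ ({u, v, w} : Finset V), h x = h u + h v + h w := by
      rw [show ({u, v, w} : Finset V) = insert u (insert v {w}) from rfl,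
        sum_insert (by simp [huv, huw]), sum_insert (by simp [hvw]), sum_singleton]
      ring
    omega
  have hrest : ∑ x ∈ univ \ {u, v, w}, g x = ∑ x ∈ univ \ {u, v, w}, f x := by
    refine sum_congr rfl ?_
    intro x hx
    simp only [mem_sdiff, mem_insert, mem_singleton] at hx
    push_neg at hx
    simp [hg, hx.2.1, hx.2.2.1, hx.2.2.2]
  have hgsum := hsplit g
  have hfsum' := hsplit f
  have hgu : g u = 0 := by simp [hg]
  have hgw : g w = 0 := by simp [hg, huw.symm, hvw.symm]
  have hdomG : romanDom G ≤ ∑ x, g x := romanDom_le G hgRDF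
  have hne : romanDom H ≠ romanDom G := by omega
  have hbond : romanBondage G ≤ B.card :=
    Nat.sInf_le ⟨B, hBsub, rfl, hne⟩
  omega

open Finset in
lemma pair_exists {V : Type*} [Fintype V] [Nonempty V] (G : SimpleGraph V)
    [DecidableRel G.Adj] (hdeg : ∀ x : V, 0 < G.degree x) :
    ∃ x y : V, x ≠ y ∧ (G.Adj x y ∨ ∃ m, G.Adj x m ∧ G.Adj m y) ∧
      ((G.degree x : ℝ) + G.degree y) * Fintype.card V ≤ 4 * G.edgeFinset.card := by
  classical
  by_contra hcon
  push_neg at hcon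
  have hn : (0 : ℝ) < Fintype.card V := by
    exact_mod_cast Fintype.card_pos
  set a : ℝ := 2 * G.edgeFinset.card / Fintype.card V with ha
  set f : V → ℝ := fun x => G.degree x - a with hfdef
  have hsum0 : ∑ x, f x = 0 := by
    have hds : (∑ x, (G.degree x : ℝ)) = 2 * G.edgeFinset.card := by
      exact_mod_cast congrArg (Nat.cast : ℕ → ℝ) G.sum_degrees_eq_twice_card_edges
    simp only [hfdef, sum_sub_distrib, hds, sum_const, card_univ, nsmul_eq_mul, ha]
    field_simp
    ring
  have hkey : ∀ x y, x ≠ y → (G.Adj x y ∨ ∃ m, G.Adj x m ∧ G.Adj m y) → 0 < f x + f y := by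
    intro x y hxy hp
    have h := hcon x y hxy hp
    have h2a : 2 * a = 4 * G.edgeFinset.card / Fintype.card V := by rw [ha]; ring
    have : 2 * a < G.degree x + G.degree y := by
      rw [h2a, div_lt_iff₀ hn]
      linarith
    simp only [hfdef]
    linarith
  set S : Finset V := univ.filter (fun v => f v ≤ 0) with hS
  have hS_pos : ∀ x, x ∉ S → 0 < f x := by
    intro x hx
    simp only [hS, mem_filter, mem_univ, true_and, not_le] at hx
    exact hx
  have hball : ∀ s ∈ S, 0 < ∑ x ∈ insert s (G.neighborFinset s), f x := by
    intro s hs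
    have hfs : f s ≤ 0 := (mem_filter.1 hs).2
    have hnb : ∀ x ∈ G.neighborFinset s, -f s < f x := by
      intro x hx
      have hadj : G.Adj s x := (SimpleGraph.mem_neighborFinset _ _ _).1 hx
      have := hkey s x hadj.ne (Or.inl hadj)
      linarith
    rw [sum_insert (SimpleGraph.notMem_neighborFinset_self _ _)]
    have hne : (G.neighborFinset s).Nonempty := by
      rw [← card_pos, G.card_neighborFinset_eq_degree]
      exact hdeg s
    have hlt : ∑ _x ∈ G.neighborFinset s, (-f s) < ∑ x ∈ G.neighborFinset s, f x :=
      sum_lt_sum_of_nonempty hne hnb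
    rw [sum_const, nsmul_eq_mul] at hlt
    have hd1 : (1 : ℝ) ≤ (G.neighborFinset s).card := by
      have := hdeg s
      rw [← G.card_neighborFinset_eq_degree] at this
      exact_mod_cast this
    nlinarith
  have hdisj : (↑S : Set V).PairwiseDisjoint (fun s => insert s (G.neighborFinset s)) := by
    intro s hs t ht hst
    simp only [Finset.disjoint_left]
    intro x hxs hxt
    have hfs : f s ≤ 0 := (mem_filter.1 hs).2
    have hft : f t ≤ 0 := (mem_filter.1 ht).2
    have hroute : G.Adj s t ∨ ∃ m, G.Adj s m ∧ G.Adj m t := by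
      rcases mem_insert.1 hxs with rfl | hxs' <;> rcases mem_insert.1 hxt with h | hxt'
      · exact absurd h hst
      · exact Or.inl ((SimpleGraph.mem_neighborFinset _ _ _).1 hxt').symm
      · exact Or.inl (h ▸ (SimpleGraph.mem_neighborFinset _ _ _).1 hxs')
      · exact Or.inr ⟨x, (SimpleGraph.mem_neighborFinset _ _ _).1 hxs',
          ((SimpleGraph.mem_neighborFinset _ _ _).1 hxt').symm⟩
    have := hkey s t hst hroute
    linarith
  rcases S.eq_empty_or_nonempty with hSe | hSne
  · have : 0 < ∑ x, f x :=
      sum_pos (fun x _ => hS_pos x (by simp [hSe])) univ_nonempty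
    linarith
  · set U := S.biUnion (fun s => insert s (G.neighborFinset s)) with hU
    have hUsum : 0 < ∑ x ∈ U, f x := by
      rw [hU, sum_biUnion hdisj]
      exact sum_pos hball hSne
    have hrest : 0 ≤ ∑ x ∈ univ \ U, f x := by
      refine sum_nonneg ?_
      intro x hx
      refine le_of_lt (hS_pos x ?_)
      intro hxS
      exact (mem_sdiff.1 hx).2 (mem_biUnion.2 ⟨x, hxS, mem_insert_self _ _⟩)
    have htot : ∑ x ∈ univ \ U, f x + ∑ x ∈ U, f x = ∑ x, f x := sum_sdiff (subset_univ U)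
    linarith

lemma conn_exists_adj {V : Type*} [Fintype V] (G : SimpleGraph V) [DecidableRel G.Adj]
    (hc : G.Connected) (h2 : 2 ≤ Fintype.card V) (v : V) : 0 < G.degree v := by
  obtain ⟨w, hw⟩ := Fintype.exists_ne_of_one_lt_card (by omega) v
  obtain ⟨p⟩ := hc.preconnected v w
  have hnp : ¬ p.Nil := SimpleGraph.Walk.not_nil_of_ne (Ne.symm hw)
  exact (SimpleGraph.degree_pos_iff_exists_adj G v).2 ⟨_, p.adj_snd hnp⟩

lemma third_vertex {V : Type*} [Fintype V] [DecidableEq V] (G : SimpleGraph V)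
    [DecidableRel G.Adj] (hc : G.Connected) (h3 : 3 ≤ Fintype.card V) {x y : V}
    (hxy : G.Adj x y) : ∃ z, z ≠ x ∧ z ≠ y ∧ (G.Adj x z ∨ G.Adj y z) := by
  classical
  by_cases hdx : 2 ≤ G.degree x
  · have : ((G.neighborFinset x).erase y).Nonempty := by
      rw [← Finset.card_pos]
      have := Finset.card_erase_le (s := G.neighborFinset x) (a := y)
      have h1 := Finset.pred_card_le_card_erase (s := G.neighborFinset x) (a := y)
      rw [G.card_neighborFinset_eq_degree] at h1
      omega
    obtain ⟨z, hz⟩ := this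
    have hzy : z ≠ y := Finset.ne_of_mem_erase hz
    have hadj : G.Adj x z := (G.mem_neighborFinset _ _).1 (Finset.mem_of_mem_erase hz)
    exact ⟨z, hadj.ne', hzy, Or.inl hadj⟩
  by_cases hdy : 2 ≤ G.degree y
  · have : ((G.neighborFinset y).erase x).Nonempty := by
      rw [← Finset.card_pos]
      have h1 := Finset.pred_card_le_card_erase (s := G.neighborFinset y) (a := x)
      rw [G.card_neighborFinset_eq_degree] at h1
      omega
    obtain ⟨z, hz⟩ := this
    have hzx : z ≠ x := Finset.ne_of_mem_erase hz
    have hadj : G.Adj y z := (G.mem_neighborFinset _ _).1 (Finset.mem_of_mem_erase hz)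
    exact ⟨z, hzx, hadj.ne', Or.inr hadj⟩
  -- degenerate: both have degree 1; contradiction with connectivity and card ≥ 3
  exfalso
  have hdx1 : G.degree x = 1 := by
    have := conn_exists_adj G hc (by omega) x
    omega
  have hdy1 : G.degree y = 1 := by
    have := conn_exists_adj G hc (by omega) y
    omega
  have singNbr : ∀ c d : V, G.Adj c d → G.degree c = 1 → G.neighborFinset c = {d} := by
    intro c d hcd hc1
    obtain ⟨t, ht⟩ := Finset.card_eq_one.1
      (by rw [G.card_neighborFinset_eq_degree]; exact hc1)
    have hd : d ∈ G.neighborFinset c := (G.mem_neighborFinset _ _).2 hcd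
    rw [ht] at hd ⊢
    rw [Finset.mem_singleton] at hd
    rw [hd]
  have hNx : G.neighborFinset x = {y} := singNbr x y hxy hdx1
  have hNy : G.neighborFinset y = {x} := singNbr y x hxy.symm hdy1
  obtain ⟨z, hzx, hzy⟩ : ∃ z : V, z ≠ x ∧ z ≠ y := by
    by_contra h
    push_neg at h
    have hsub : (Finset.univ : Finset V) ⊆ {x, y} := by
      intro z _
      rcases eq_or_ne z x with rfl | hne
      · exact Finset.mem_insert_self _ _
      · rw [h z hne]; exact Finset.mem_insert_of_mem (Finset.mem_singleton_self _)
    have h1 := Finset.card_le_card hsub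
    have h2 : ({x, y} : Finset V).card ≤ 2 :=
      le_trans (Finset.card_insert_le _ _) (by simp)
    rw [Finset.card_univ] at h1
    omega
  have key : ∀ n (c : V) (p : G.Walk c z), p.length ≤ n → (c = x ∨ c = y) → False := by
    intro n
    induction n with
    | zero =>
      intro c p hl hcxy
      have hnil : p.Nil := SimpleGraph.Walk.nil_iff_length_eq.2 (by omega)
      have hcz : c = z := hnil.eq
      rcases hcxy with rfl | rfl
      · exact hzx hcz.symm
      · exact hzy hcz.symm
    | succ n ih =>
      intro c p hl hcxy
      have hcz : c ≠ z := by
        rcases hcxy with rfl | rfl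
        · exact fun h => hzx h.symm
        · exact fun h => hzy h.symm
      have hnp : ¬ p.Nil := SimpleGraph.Walk.not_nil_of_ne hcz
      have hadj : G.Adj c (p.getVert 1) := p.adj_snd hnp
      have hlen : p.tail.length + 1 = p.length := SimpleGraph.Walk.length_tail_add_one hnp
      refine ih (p.getVert 1) p.tail (by omega) ?_
      have hmem : p.getVert 1 ∈ G.neighborFinset c := (G.mem_neighborFinset _ _).2 hadj
      rcases hcxy with rfl | rfl
      · rw [hNx] at hmem
        exact Or.inr (Finset.mem_singleton.1 hmem)
      · rw [hNy] at hmem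
        exact Or.inl (Finset.mem_singleton.1 hmem)
  obtain ⟨p⟩ := hc.preconnected x z
  exact key p.length x p le_rfl (Or.inl rfl)


/-- If `G` is connected with `Δ(G) ≥ 2`, then
`b_R(G) ≤ 2·ad(G) + Δ(G) − 3`. -/
theorem stmt12 {V : Type*} [Fintype V] [DecidableEq V] (G : SimpleGraph V)
    [DecidableRel G.Adj] (hc : G.Connected) (hΔ : 2 ≤ G.maxDegree) :
    (romanBondage G : ℝ) ≤
      2 * (2 * G.edgeFinset.card / Fintype.card V) + G.maxDegree - 3 := by
  classical
  have hV : Nonempty V := hc.nonempty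
  obtain ⟨vmax, hvmax⟩ := G.exists_maximal_degree_vertex
  have hd2 : 2 ≤ G.degree vmax := hvmax ▸ hΔ
  have h3 : 3 ≤ Fintype.card V := by
    have hcard2 : 1 < (G.neighborFinset vmax).card := by
      rw [G.card_neighborFinset_eq_degree]; omega
    obtain ⟨a, ha, b, hb, hab⟩ := Finset.one_lt_card.1 hcard2
    have hav : a ≠ vmax := ((G.mem_neighborFinset _ _).1 ha).ne'
    have hbv : b ≠ vmax := ((G.mem_neighborFinset _ _).1 hb).ne'
    have hsub : ({vmax, a, b} : Finset V) ⊆ Finset.univ := Finset.subset_univ _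
    have hcard3 : ({vmax, a, b} : Finset V).card = 3 := by
      rw [Finset.card_insert_of_notMem (by simp [hav.symm, hbv.symm] : vmax ∉ ({a, b} : Finset V)),
        Finset.card_insert_of_notMem (by simp [hab] : a ∉ ({b} : Finset V)),
        Finset.card_singleton]
    have := Finset.card_le_card hsub
    rw [hcard3, Finset.card_univ] at this
    exact this
  have hdeg : ∀ x : V, 0 < G.degree x := conn_exists_adj G hc (by omega)
  obtain ⟨x, y, hxy, hroute, hbound⟩ := pair_exists G hdeg
  obtain ⟨t, hpath⟩ : ∃ t : V, romanBondage G + 3 ≤ G.degree x + G.degree y + G.degree t := by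
    rcases hroute with hadj | ⟨m, hm1, hm2⟩
    · obtain ⟨z, hzx, hzy, hz⟩ := third_vertex G hc h3 hadj
      rcases hz with h | h
      · exact ⟨z, by have := path_bondage G h.symm hadj hzy; omega⟩
      · exact ⟨z, by have := path_bondage G hadj h (fun hh => hzx hh.symm); omega⟩
    · exact ⟨m, by have := path_bondage G hm1 hm2 hxy; omega⟩
  have hdt : G.degree t ≤ G.maxDegree := G.degree_le_maxDegree t
  have hn : (0 : ℝ) < Fintype.card V := by
    have : (0 : ℕ) < Fintype.card V := by omega
    exact_mod_cast this
  have hxyR : (G.degree x : ℝ) + G.degree y ≤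
      2 * (2 * G.edgeFinset.card / Fintype.card V) := by
    rw [show (2 : ℝ) * (2 * G.edgeFinset.card / Fintype.card V)
        = 4 * G.edgeFinset.card / Fintype.card V by ring, le_div_iff₀ hn]
    exact hbound
  have hcast : (romanBondage G : ℝ) + 3 ≤ G.degree x + G.degree y + G.degree t := by
    exact_mod_cast hpath
  have hdtR : (G.degree t : ℝ) ≤ G.maxDegree := by exact_mod_cast hdt
  linarith
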